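/- Let ε ∈ [0,1], λ > 0, n ≥ 2, and for the Po2-ε scheme define r_i⁺(Q) = (2λ/(n−1))·Σ_{j≠i} p(Q_i,Q_j) with p(Q_i,Q_j) = (1−ε)1{Q_i<Q_j} + ε1{Q_i>Q_j} + 1{Q_i=Q_j, i<j}. Then Σ_{i=1}^n r_i⁺(Q)·Q_i ≤ λ·max(1,2ε)·Σ_{i=1}^n Q_i for all Q ∈ ℤ_+^n. -/

import Mathlib

open Finset

/-- Join probability under the Po2-ε scheme. -/
noncomputable def pEps (ε : ℝ) {n : ℕ} (qi qj : ℕ) (i j : Fin n) : ℝ :=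
  (1 - ε) * (if qi < qj then 1 else 0) + ε * (if qj < qi then 1 else 0)
  + (if qi = qj ∧ i < j then 1 else 0)

/-- Arrival rate to server i under the Po2-ε scheme. -/
noncomputable def rPlusEps (lam ε : ℝ) {n : ℕ} (Q : Fin n → ℕ) (i : Fin n) : ℝ :=
  (2 * lam / ((n : ℝ) - 1)) * ∑ j ∈ Finset.univ.erase i, pEps ε (Q i) (Q j) i j

lemma sum_erase_swap {n : ℕ} (f : Fin n → Fin n → ℝ) :
    ∑ i, ∑ j ∈ Finset.univ.erase i, f i j = ∑ i, ∑ j ∈ Finset.univ.erase i, f j i := by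
  have h1 : ∀ (g : Fin n → Fin n → ℝ), (∑ i, ∑ j ∈ Finset.univ.erase i, g i j)
      = (∑ i, ∑ j, g i j) - ∑ i, g i i := by
    intro g
    rw [← Finset.sum_sub_distrib]
    exact Finset.sum_congr rfl fun i _ => Finset.sum_erase_eq_sub (Finset.mem_univ i)
  rw [h1, h1 (fun i j => f j i), Finset.sum_comm]

theorem po2eps_arrival_rate_bound (ε lam : ℝ) (hε0 : 0 ≤ ε) (hε1 : ε ≤ 1)
    (hlam : 0 < lam) (n : ℕ) (hn : 2 ≤ n) (Q : Fin n → ℕ) :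
    ∑ i, rPlusEps lam ε Q i * (Q i : ℝ)
      ≤ lam * max 1 (2 * ε) * ∑ i, (Q i : ℝ) := by
  have hn2 : (2:ℝ) ≤ (n:ℝ) := by exact_mod_cast hn
  have hn0 : (0:ℝ) < (n:ℝ) - 1 := by linarith
  set M := max 1 (2*ε) with hM
  have hM1 : (1:ℝ) ≤ M := le_max_left _ _
  have hMε : 2*ε ≤ M := le_max_right _ _
  set g : Fin n → Fin n → ℝ := fun i j => pEps ε (Q i) (Q j) i j * (Q i : ℝ) with hg
  set S : ℝ := ∑ i, ∑ j ∈ Finset.univ.erase i, g i j with hS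
  set T : ℝ := ∑ i, (Q i : ℝ) with hT
  -- pairwise bound
  have key : ∀ i j : Fin n, i ≠ j →
      g i j + g j i ≤ M / 2 * ((Q i : ℝ) + (Q j : ℝ)) := by
    intro i j hij
    have hQi : (0:ℝ) ≤ (Q i : ℝ) := Nat.cast_nonneg _
    have hQj : (0:ℝ) ≤ (Q j : ℝ) := Nat.cast_nonneg _
    simp only [hg, pEps]
    rcases lt_trichotomy (Q i) (Q j) with h | h | h
    · have h1 : (Q i : ℝ) ≤ (Q j : ℝ) := by exact_mod_cast h.le
      simp only [if_pos h, if_neg (not_lt.mpr h.le),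
        if_neg (fun hc : Q i = Q j ∧ i < j => absurd hc.1 h.ne),
        if_neg (fun hc : Q j = Q i ∧ j < i => absurd hc.1 h.ne')]
      rcases le_or_gt ε (1/2) with hh | hh
      · nlinarith
      · nlinarith
    · have h1 : (Q i : ℝ) = (Q j : ℝ) := by exact_mod_cast h
      simp only [if_neg (lt_irrefl _), h, if_neg (lt_irrefl (Q j))]
      rcases hij.lt_or_gt with hlt | hlt
      · simp only [true_and, if_pos hlt, if_neg (asymm hlt : ¬ j < i)]
        nlinarith
      · simp only [true_and, if_pos hlt, if_neg (asymm hlt : ¬ i < j)]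
        nlinarith
    · have h1 : (Q j : ℝ) ≤ (Q i : ℝ) := by exact_mod_cast h.le
      simp only [if_pos h, if_neg (not_lt.mpr h.le),
        if_neg (fun hc : Q i = Q j ∧ i < j => absurd hc.1 h.ne'),
        if_neg (fun hc : Q j = Q i ∧ j < i => absurd hc.1 h.ne)]
      rcases le_or_gt ε (1/2) with hh | hh
      · nlinarith
      · nlinarith
  -- sum bound
  have hSbound : 2 * S ≤ M * ((n:ℝ) - 1) * T := by
    have h2S : 2 * S = ∑ i, ∑ j ∈ Finset.univ.erase i, (g i j + g j i) := by
      simp only [Finset.sum_add_distrib]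
      rw [← sum_erase_swap g]
      ring
    rw [h2S]
    have hstep : ∑ i, ∑ j ∈ Finset.univ.erase i, (g i j + g j i)
        ≤ ∑ i, ∑ j ∈ Finset.univ.erase i, M / 2 * ((Q i : ℝ) + (Q j : ℝ)) := by
      refine Finset.sum_le_sum fun i _ => Finset.sum_le_sum fun j hj => ?_
      exact key i j (Finset.ne_of_mem_erase hj).symm
    refine hstep.trans_eq ?_
    have hcard : ∀ i : Fin n, ((Finset.univ.erase i).card : ℝ) = (n:ℝ) - 1 := by
      intro i
      rw [Finset.card_erase_of_mem (Finset.mem_univ i), Finset.card_univ, Fintype.card_fin]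
      have h1 : 1 ≤ n := le_trans (by norm_num) hn
      push_cast [Nat.cast_sub h1]
      ring
    have hinner : ∀ i : Fin n, ∑ j ∈ Finset.univ.erase i, ((Q i : ℝ) + (Q j : ℝ))
        = ((n:ℝ) - 1) * (Q i : ℝ) + (T - (Q i : ℝ)) := by
      intro i
      rw [Finset.sum_add_distrib, Finset.sum_const, nsmul_eq_mul, hcard,
        Finset.sum_erase_eq_sub (Finset.mem_univ i)]
    simp only [← Finset.mul_sum, hinner]
    rw [Finset.sum_add_distrib, Finset.sum_sub_distrib, Finset.sum_const, nsmul_eq_mul,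
      ← Finset.mul_sum, Finset.card_univ, Fintype.card_fin, ← hT]
    ring
  -- rewrite LHS
  have hLHS : ∑ i, rPlusEps lam ε Q i * (Q i : ℝ) = (2 * lam / ((n:ℝ) - 1)) * S := by
    rw [hS, Finset.mul_sum]
    refine Finset.sum_congr rfl fun i _ => ?_
    rw [rPlusEps, Finset.mul_sum, Finset.mul_sum, Finset.sum_mul]
    exact Finset.sum_congr rfl fun j _ => by rw [hg]; ring
  rw [hLHS]
  have hpos : (0:ℝ) < 2 * lam / ((n:ℝ) - 1) := by positivity
  have := mul_le_mul_of_nonneg_left hSbound (le_of_lt (by positivity : (0:ℝ) < lam / ((n:ℝ)-1)))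
  have heq : lam / ((n:ℝ)-1) * (M * ((n:ℝ) - 1) * T) = lam * M * T := by
    field_simp
  have heq2 : lam / ((n:ℝ)-1) * (2 * S) = 2 * lam / ((n:ℝ) - 1) * S := by
    field_simp
  rw [heq, heq2] at this
  linarith
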